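/- Let γ_{0,2,2} be the permutation of {1,…,5} whose one-line notation is 4, 3, 5, 2, 1. Then for all n ≥ 3, |S_n(132, 123, γ_{0,2,2})| = F_{n+2} + F_n − 3, where F_m denotes the m-th Fibonacci number. -/

import Mathlib

set_option maxHeartbeats 1000000

/-- `π` contains `σ` as a pattern: there is a subsequence of `π` (in one-line notation)
whose entries are in the same relative order as those of `σ`. -/
def PContains {n k : ℕ} (π : Equiv.Perm (Fin n)) (σ : Equiv.Perm (Fin k)) : Prop :=
  ∃ f : Fin k → Fin n, StrictMono f ∧ ∀ s t : Fin k, π (f s) < π (f t) ↔ σ s < σ t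

/-- `π` avoids the pattern `σ`. -/
def PAvoids {n k : ℕ} (π : Equiv.Perm (Fin n)) (σ : Equiv.Perm (Fin k)) : Prop :=
  ¬ PContains π σ

/-- The pattern 123 (the identity permutation of `{1,2,3}`). -/
def p123 : Equiv.Perm (Fin 3) := Equiv.refl (Fin 3)

/-- The pattern 132 (one-line notation `1,3,2`, zero-indexed `0,2,1`). -/
noncomputable def p132 : Equiv.Perm (Fin 3) := Equiv.ofBijective ![0, 2, 1] (by decide)

/-- The pattern `γ_{0,2,2}` with one-line notation `4,3,5,2,1` (zero-indexed `3,2,4,1,0`). -/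
noncomputable def g022 : Equiv.Perm (Fin 5) := Equiv.ofBijective ![3, 2, 4, 1, 0] (by decide)

open Finset

/-- The explicit family member: descending-with-swaps on top `[0,t)`,
then descending lows, a "float" at position `n-1-j`, and a small increasing tail. -/
def fam (n t j : ℕ) (S : Finset ℕ) (i : ℕ) : ℕ :=
  if i < t then
    (if i ∈ S then n - 2 - i else if 1 ≤ i ∧ i - 1 ∈ S then n - i else n - 1 - i)
  else
    (if i + 1 + j < n then n - 2 - i
     else if i + 1 + j = n then n - t - 1
     else i + j - n)

def Valid (n j t : ℕ) (S : Finset ℕ) : Prop :=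
  ((j = 3 ∧ t = n) ∨ (j ≤ 2 ∧ t + 3 + j ≤ n)) ∧ (∀ p ∈ S, p + 2 ≤ t) ∧ (∀ p ∈ S, p + 1 ∉ S)

section FamLemmas
variable {n t j : ℕ} {S : Finset ℕ}

lemma fam_spec (hv : Valid n j t S) (i : ℕ) (hi : i < n) :
    (i < t ∧ i ∈ S ∧ fam n t j S i + i + 2 = n ∧ i + 2 ≤ t) ∨
    (i < t ∧ i ∉ S ∧ 1 ≤ i ∧ i - 1 ∈ S ∧ i - 1 + 2 ≤ t ∧ fam n t j S i + i = n) ∨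
    (i < t ∧ i ∉ S ∧ (i = 0 ∨ i - 1 ∉ S) ∧ fam n t j S i + i + 1 = n) ∨
    (t ≤ i ∧ i + 1 + j < n ∧ fam n t j S i + i + 2 = n ∧ j ≤ 2 ∧ t + 3 + j ≤ n) ∨
    (t ≤ i ∧ i + 1 + j = n ∧ fam n t j S i + t + 1 = n ∧ j ≤ 2 ∧ t + 3 + j ≤ n) ∨
    (t ≤ i ∧ n < i + 1 + j ∧ fam n t j S i + n = i + j ∧ j ≤ 2 ∧ t + 3 + j ≤ n) := by
  obtain ⟨hjt, hsub, hadj⟩ := hv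
  have ht : t ≤ n := by rcases hjt with ⟨_, h⟩ | ⟨_, h⟩ <;> omega
  by_cases hit : i < t
  · by_cases hiS : i ∈ S
    · have h2 := hsub i hiS
      left
      refine ⟨hit, hiS, ?_, h2⟩
      simp [fam, hit, hiS]; omega
    · by_cases hprev : 1 ≤ i ∧ i - 1 ∈ S
      · have h2 := hsub _ hprev.2
        right; left
        refine ⟨hit, hiS, hprev.1, hprev.2, h2, ?_⟩
        simp [fam, hit, hiS, hprev]; omega
      · right; right; left
        refine ⟨hit, hiS, ?_, ?_⟩
        · rcases Nat.eq_zero_or_pos i with h0 | h0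
          · exact Or.inl h0
          · exact Or.inr fun hm => hprev ⟨h0, hm⟩
        · simp [fam, hit, hiS, hprev]; omega
  · have hbj : j ≤ 2 ∧ t + 3 + j ≤ n := by
      rcases hjt with ⟨_, h⟩ | h
      · omega
      · exact h
    push_neg at hit
    rcases lt_trichotomy (i + 1 + j) n with h | h | h
    · right; right; right; left
      refine ⟨hit, h, ?_, hbj.1, hbj.2⟩
      simp [fam, not_lt.2 hit, h]; omega
    · right; right; right; right; left
      refine ⟨hit, h, ?_, hbj.1, hbj.2⟩
      simp [fam, not_lt.2 hit, h]; omega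
    · right; right; right; right; right
      refine ⟨hit, h, ?_, hbj.1, hbj.2⟩
      simp only [fam]
      rw [if_neg (by omega : ¬ i < t), if_neg (by omega : ¬ i + 1 + j < n),
        if_neg (by omega : ¬ i + 1 + j = n)]
      omega

end FamLemmas

section FamMain
variable {n t j : ℕ} {S : Finset ℕ}

lemma fam_lt (hv : Valid n j t S) {i : ℕ} (hi : i < n) : fam n t j S i < n := by
  rcases fam_spec hv i hi with h | h | h | h | h | h <;> omega

lemma fam_inj (hv : Valid n j t S) {a b : ℕ} (ha : a < n) (hb : b < n) (hab : a < b)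
    (he : fam n t j S a = fam n t j S b) : False := by
  have hadj := hv.2.2
  rcases fam_spec hv a ha with ⟨hat, haS, hav, hat2⟩ | ⟨hat, haS, ha1, haPS, haP2, hav⟩ |
      ⟨hat, haS, haP, hav⟩ | ⟨hat, hal, hav, hj2, htn⟩ | ⟨hat, haf, hav, hj2, htn⟩ |
      ⟨hat, hatl, hav, hj2, htn⟩ <;>
    rcases fam_spec hv b hb with ⟨hbt, hbS, hbv, hbt2⟩ | ⟨hbt, hbS, hb1, hbPS, hbP2, hbv⟩ |
      ⟨hbt, hbS, hbP, hbv⟩ | ⟨hbt, hbl, hbv, hj2b, htnb⟩ | ⟨hbt, hbf, hbv, hj2b, htnb⟩ |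
      ⟨hbt, hbtl, hbv, hj2b, htnb⟩ <;>
    first
    | omega
    | (have hb1e : b - 1 = a + 1 := by omega
       exact hadj a haS (hb1e ▸ hbPS))
    | (have hb0 : b - 1 = a := by omega
       cases hbP with
       | inl h0 => omega
       | inr h0 => exact h0 (hb0 ▸ haS))
    | (have hb0 : b - 1 = a := by omega
       exact haS (hb0 ▸ hbPS))

lemma fam_Q1 (hv : Valid n j t S) {a b k : ℕ} (hb : b < n) (hk : k < n)
    (hab : a < b) (hbk : b < k) (hasc : fam n t j S a < fam n t j S b) :
    fam n t j S k < fam n t j S a := by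
  have hadj := hv.2.2
  have ha : a < n := by omega
  rcases fam_spec hv a ha with ⟨hat, haS, hav, hat2⟩ | ⟨hat, haS, ha1, haPS, haP2, hav⟩ |
      ⟨hat, haS, haP, hav⟩ | ⟨hat, hal, hav, hj2, htn⟩ | ⟨hat, haf, hav, hj2, htn⟩ |
      ⟨hat, hatl, hav, hj2, htn⟩ <;>
    rcases fam_spec hv b hb with ⟨hbt, hbS, hbv, hbt2⟩ | ⟨hbt, hbS, hb1, hbPS, hbP2, hbv⟩ |
      ⟨hbt, hbS, hbP, hbv⟩ | ⟨hbt, hbl, hbv, hj2b, htnb⟩ | ⟨hbt, hbf, hbv, hj2b, htnb⟩ |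
      ⟨hbt, hbtl, hbv, hj2b, htnb⟩ <;>
    rcases fam_spec hv k hk with ⟨hkt, hkS, hkv, hkt2⟩ | ⟨hkt, hkS, hk1, hkPS, hkP2, hkv⟩ |
      ⟨hkt, hkS, hkP, hkv⟩ | ⟨hkt, hkl, hkv, hj2k, htnk⟩ | ⟨hkt, hkf, hkv, hj2k, htnk⟩ |
      ⟨hkt, hktl, hkv, hj2k, htnk⟩ <;>
    first
    | omega
    | (by_cases hk2 : k = a + 2
       · have hk1e : k - 1 = a + 1 := by omega
         exact absurd (hk1e ▸ hkPS) (hadj a haS)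
       · omega)

lemma fam_noChain (hv : Valid n j t S) {i1 i2 i3 i4 i5 : ℕ} (h5 : i5 < n)
    (h12 : i1 < i2) (h23 : i2 < i3) (h34 : i3 < i4) (h45 : i4 < i5)
    (e13 : fam n t j S i1 < fam n t j S i3) (e54 : fam n t j S i5 < fam n t j S i4) : False := by
  have h1 : i1 < n := by omega
  have h3 : i3 < n := by omega
  have h4 : i4 < n := by omega
  have hF : i3 + 1 + j = n ∧ j ≤ 2 ∧ t ≤ i3 := by
    rcases fam_spec hv i1 h1 with h | h | h | h | h | h <;>
      rcases fam_spec hv i3 h3 with h' | h' | h' | h' | h' | h' <;> omega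
  rcases fam_spec hv i4 h4 with h | h | h | h | h | h <;>
    rcases fam_spec hv i5 h5 with h' | h' | h' | h' | h' | h' <;> omega

end FamMain

section FamPerm
variable {n t j : ℕ} {S : Finset ℕ}

noncomputable def famPerm (hv : Valid n j t S) : Equiv.Perm (Fin n) :=
  Equiv.ofBijective (fun i => (⟨fam n t j S i, fam_lt hv i.2⟩ : Fin n))
    (Finite.injective_iff_bijective.mp (by
      intro a b h
      simp only [Fin.mk.injEq] at h
      rcases lt_trichotomy a b with hab | hab | hab
      · exact absurd h (by intro he; exact fam_inj hv a.2 b.2 hab he)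
      · exact hab
      · exact absurd h.symm (by intro he; exact fam_inj hv b.2 a.2 hab he)))

lemma famPerm_apply (hv : Valid n j t S) (i : Fin n) :
    (famPerm hv i : ℕ) = fam n t j S i := rfl

end FamPerm

section Complete
variable {n : ℕ} (π : Equiv.Perm (Fin n))

def HasChain : Prop := ∃ i1 i2 i3 i4 i5 : Fin n, i1 < i2 ∧ i2 < i3 ∧ i3 < i4 ∧ i4 < i5 ∧
    π i5 < π i4 ∧ π i4 < π i2 ∧ π i2 < π i1 ∧ π i1 < π i3

def Q1' : Prop := ∀ i j k : Fin n, i < j → j < k → π i < π j → π k < π i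

lemma card_val_lt (x : Fin n) :
    ((univ : Finset (Fin n)).filter fun k => π k < x).card = x := by
  have : ((univ : Finset (Fin n)).filter fun k => π k < x) = (Finset.Iio x).image π.symm := by
    ext k
    simp only [mem_filter, mem_univ, true_and, mem_image, mem_Iio]
    constructor
    · intro h; exact ⟨π k, h, π.symm_apply_apply k⟩
    · rintro ⟨v, hv, rfl⟩; simpa using hv
  rw [this, Finset.card_image_of_injective _ π.symm.injective, Fin.card_Iio]

/-- Lower bound: `π i ≥ n - 2 - i`. -/
lemma lb (hQ : Q1' π) (i : Fin n) : n ≤ (π i : ℕ) + i + 2 := by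
  classical
  set U := (Finset.Ioi i).filter (fun k => π k < π i) with hU
  set V := (Finset.Ioi i).filter (fun k => π i < π k) with hV
  have hVcard : V.card ≤ 1 := by
    refine Finset.card_le_one.2 ?_
    intro a ha b hb
    simp only [hV, mem_filter, mem_Ioi] at ha hb
    by_contra hne
    rcases lt_or_gt_of_ne (fun e : a = b => hne e) with h | h
    · exact absurd hb.2 (not_lt_of_gt (hQ i a b ha.1 h ha.2))
    · exact absurd ha.2 (not_lt_of_gt (hQ i b a hb.1 h hb.2))
  have hsub : Finset.Ioi i ⊆ U ∪ V := by
    intro k hk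
    simp only [mem_Ioi] at hk
    have : π k ≠ π i := fun e => (ne_of_gt hk) (π.injective e)
    rcases lt_or_gt_of_ne this with h | h
    · exact Finset.mem_union_left _ (by simp [hU, hk, h])
    · exact Finset.mem_union_right _ (by simp [hV, hk, h])
  have h1 : (Finset.Ioi i).card ≤ U.card + V.card :=
    le_trans (Finset.card_le_card hsub) (Finset.card_union_le _ _)
  have h2 : U.card ≤ (π i : ℕ) := by
    have him : U.image (fun k => (π k : ℕ)) ⊆ Finset.range (π i) := by
      intro x hx
      simp only [mem_image] at hx
      obtain ⟨k, hk, rfl⟩ := hx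
      simp only [hU, mem_filter, mem_Ioi] at hk
      simp [hk.2]
    have hinj : Set.InjOn (fun k => ((π k : ℕ))) U := by
      intro a _ b _ h
      exact π.injective (Fin.val_injective h)
    calc U.card = (U.image fun k => (π k : ℕ)).card := (Finset.card_image_of_injOn hinj).symm
      _ ≤ (Finset.range (π i)).card := Finset.card_le_card him
      _ = (π i : ℕ) := Finset.card_range _
  have h3 : (Finset.Ioi i).card = n - 1 - i := Fin.card_Ioi i
  have : (i : ℕ) < n := i.2
  omega

/-- structure around a "special" position: two descending lows before, increasing tail after. -/
lemma special_struct (hQ : Q1' π) (hNC : ¬ HasChain π) (F : Fin n)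
    (hsp : n + 1 ≤ (π F : ℕ) + F) :
    (∀ q k : Fin n, q < F → π q < π F → F < k → π k < π q) ∧
    (∀ k l : Fin n, F < k → k < l → π k < π l) ∧ n ≤ (F : ℕ) + 3 ∧
    (∃ q0 : Fin n, q0 < F ∧ π q0 < π F) := by
  classical
  -- at least two lows before F
  set A := (Finset.Iio F).filter (fun q => π q < π F) with hA
  have hAcard : 2 ≤ A.card := by
    have hsplit : (univ : Finset (Fin n)).filter (fun q => π q < π F) ⊆
        A ∪ (Finset.Ioi F).filter (fun q => π q < π F) := by
      intro q hq
      simp only [mem_filter, mem_univ, true_and] at hq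
      have : q ≠ F := fun e => absurd hq (e ▸ lt_irrefl _)
      rcases lt_or_gt_of_ne this with h | h
      · exact Finset.mem_union_left _ (by simp [hA, h, hq])
      · exact Finset.mem_union_right _ (by simp [h, hq])
    have h1 : ((π F : ℕ)) ≤ A.card + ((Finset.Ioi F).filter (fun q => π q < π F)).card := by
      rw [← card_val_lt π (π F)]
      exact le_trans (Finset.card_le_card hsplit) (Finset.card_union_le _ _)
    have h2 : ((Finset.Ioi F).filter (fun q => π q < π F)).card ≤ n - 1 - F := by
      rw [← Fin.card_Ioi F]
      exact Finset.card_le_card (Finset.filter_subset _ _)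
    have : (F : ℕ) < n := F.2
    omega
  obtain ⟨a, ha, b, hb, hab⟩ := Finset.one_lt_card.mp (by omega : 1 < A.card)
  simp only [hA, mem_filter, mem_Iio] at ha hb
  -- order them: j1 < j2 with descending values
  obtain ⟨j1, j2, hj12, hj2F, hd, hj1F⟩ :
      ∃ j1 j2 : Fin n, j1 < j2 ∧ j2 < F ∧ π j2 < π j1 ∧ π j1 < π F := by
    rcases lt_or_gt_of_ne hab with h | h
    · have hdesc : π b < π a := by
        by_contra hcon
        push_neg at hcon
        have : π a < π b := lt_of_le_of_ne hcon (fun e => hab (π.injective e))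
        exact absurd ha.2 (not_lt_of_gt (hQ a b F h hb.1 this))
      exact ⟨a, b, h, hb.1, hdesc, ha.2⟩
    · have hdesc : π a < π b := by
        by_contra hcon
        push_neg at hcon
        have : π b < π a := lt_of_le_of_ne hcon (fun e => hab (π.injective e.symm))
        exact absurd hb.2 (not_lt_of_gt (hQ b a F h ha.1 this))
      exact ⟨b, a, h, ha.1, hdesc, hb.2⟩
  have htl : ∀ q k : Fin n, q < F → π q < π F → F < k → π k < π q :=
    fun q k hqF hq hFk => hQ q F k hqF hFk hq
  have hinc : ∀ k l : Fin n, F < k → k < l → π k < π l := by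
    intro k l hFk hkl
    by_contra hcon
    push_neg at hcon
    have : π l < π k := lt_of_le_of_ne hcon (fun e => (ne_of_gt hkl) (π.injective e))
    exact hNC ⟨j1, j2, F, k, l, hj12, hj2F, hFk, hkl, this, htl j2 k hj2F (hd.trans hj1F) hFk, hd, hj1F⟩
  refine ⟨htl, hinc, ?_, ⟨j1, hj12.trans hj2F, hj1F⟩⟩
  by_contra hcon
  push_neg at hcon
  have h1 : ((F : ℕ) + 1) < n := by omega
  have h2 : ((F : ℕ) + 2) < n := by omega
  have h3 : ((F : ℕ) + 3) < n := by omega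
  set k1 : Fin n := ⟨F + 1, h1⟩
  set k2 : Fin n := ⟨F + 2, h2⟩
  set k3 : Fin n := ⟨F + 3, h3⟩
  have e12 : π k1 < π k2 := hinc k1 k2 (by simp [k1, Fin.lt_def]) (by simp [k1, k2, Fin.lt_def])
  have e13 : π k1 < π k3 := hinc k1 k3 (by simp [k1, Fin.lt_def]) (by simp [k1, k3, Fin.lt_def])
  exact absurd e13 (not_lt_of_gt (hQ k1 k2 k3 (by simp [k1, k2, Fin.lt_def])
    (by simp [k2, k3, Fin.lt_def]) e12))

end Complete

section TopStruct
variable {n : ℕ} (π : Equiv.Perm (Fin n))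

/-- Structure of the "top" part `[0,t)`: descending with disjoint adjacent swaps. -/
lemma top_struct (hQ : Q1' π) (t : ℕ) (ht : t ≤ n)
    (hub : ∀ i : Fin n, (i : ℕ) < t → (π i : ℕ) + i ≤ n)
    (hlo : ∀ i : Fin n, (i : ℕ) < t → n ≤ (π i : ℕ) + t)
    (hvp : ∀ x : Fin n, n ≤ (x : ℕ) + t → ((π.symm x : ℕ) < t)) :
    ∃ S : Finset ℕ, (∀ p ∈ S, p + 2 ≤ t) ∧ (∀ p ∈ S, p + 1 ∉ S) ∧
      ∀ i : Fin n, (i : ℕ) < t →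
        ((i : ℕ) ∈ S ∧ (π i : ℕ) + i + 2 = n) ∨
        ((i : ℕ) ∉ S ∧ 1 ≤ (i : ℕ) ∧ ((i : ℕ) - 1) ∈ S ∧ (π i : ℕ) + i = n) ∨
        ((i : ℕ) ∉ S ∧ ((i : ℕ) = 0 ∨ (i : ℕ) - 1 ∉ S) ∧ (π i : ℕ) + i + 1 = n) := by
  classical
  set PS : Fin n → Prop := fun i => (i : ℕ) + 2 ≤ t ∧ (π i : ℕ) + i + 2 = n with hPS
  -- the "who has value n-1-i" analysis
  have hwho : ∀ i : Fin n, PS i → ∃ k : Fin n, (k : ℕ) < t ∧ (π k : ℕ) + i + 1 = n ∧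
      (i : ℕ) ≤ (k : ℕ) + 1 ∧ (k : ℕ) ≤ (i : ℕ) + 1 ∧ (k : ℕ) ≠ i := by
    intro i hi
    have hn1 : n - 1 - (i : ℕ) < n := by omega
    set x : Fin n := ⟨n - 1 - (i : ℕ), hn1⟩ with hx
    set k := π.symm x with hk
    have hπk : π k = x := π.apply_symm_apply x
    have hkv : (π k : ℕ) = n - 1 - (i : ℕ) := by rw [hπk]
    have hxval : (x : ℕ) = n - 1 - (i : ℕ) := rfl
    have hkt : (k : ℕ) < t := hvp x (by have := hi.1; omega)
    have h1 := lb π hQ k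
    have h2 := hub k hkt
    refine ⟨k, hkt, by omega, by omega, by omega, ?_⟩
    intro he
    have : k = i := Fin.val_injective he
    rw [this] at hkv
    have := hi.2
    omega
  -- no two adjacent PS positions
  have hA3 : ∀ m : ℕ, ∀ i i' : Fin n, (i : ℕ) = m → PS i → PS i' →
      (i' : ℕ) = (i : ℕ) + 1 → False := by
    intro m
    induction m using Nat.strong_induction_on with
    | _ m IH =>
      intro i i' him hi hi' hii'
      obtain ⟨k, hkt, hkval, hk1, hk2, hkne⟩ := hwho i hi
      -- k ≠ i' since values differ
      have hkne' : (k : ℕ) ≠ (i' : ℕ) := by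
        intro he
        have : k = i' := Fin.val_injective he
        have h1 : (π k : ℕ) = (π i' : ℕ) := by rw [this]
        have := hi'.2
        omega
      have hk3 : (k : ℕ) = (i : ℕ) - 1 ∧ 1 ≤ (i : ℕ) := by omega
      have hPSk : PS k := by
        constructor
        · have := hi'.1; omega
        · omega
      exact IH k (by omega) k i rfl hPSk hi (by omega)
  have hA2 : ∀ i i' : Fin n, PS i → (i' : ℕ) = (i : ℕ) + 1 → (π i' : ℕ) + i' = n := by
    intro i i' hi hii'
    obtain ⟨k, hkt, hkval, hk1, hk2, hkne⟩ := hwho i hi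
    by_cases hcase : (k : ℕ) = (i : ℕ) - 1 ∧ 1 ≤ (i : ℕ)
    · exfalso
      have hPSk : PS k := ⟨by have := hi.1; omega, by omega⟩
      exact hA3 (k : ℕ) k i rfl hPSk hi (by omega)
    · have : (k : ℕ) = (i' : ℕ) := by omega
      have hke : k = i' := Fin.val_injective this
      rw [hke] at hkval
      omega
  have hA1 : ∀ m : ℕ, ∀ i : Fin n, (i : ℕ) = m → (i : ℕ) < t → (π i : ℕ) + i = n →
      1 ≤ (i : ℕ) ∧ ∃ ip : Fin n, (ip : ℕ) + 1 = (i : ℕ) ∧ PS ip := by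
    intro m
    induction m using Nat.strong_induction_on with
    | _ m IH =>
      intro i him hit hival
      have hi1 : 1 ≤ (i : ℕ) := by
        have : (π i : ℕ) < n := (π i).2
        omega
      have hipn : (i : ℕ) - 1 < n := by omega
      set ip : Fin n := ⟨(i : ℕ) - 1, hipn⟩ with hip
      have hipval : (ip : ℕ) = (i : ℕ) - 1 := rfl
      have hipt : (ip : ℕ) < t := by omega
      have h1 := lb π hQ ip
      have h2 := hub ip hipt
      have hne : (π ip : ℕ) ≠ n - (i : ℕ) := by
        intro he
        have : (π ip : ℕ) = (π i : ℕ) := by omega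
        have : ip = i := π.injective (Fin.val_injective this)
        have : (ip : ℕ) = (i : ℕ) := by rw [this]
        simp [hip] at this
        omega
      by_cases hcase : (π ip : ℕ) + ip = n
      · exfalso
        obtain ⟨hip1, ipp, hippv, hippPS⟩ := IH (ip : ℕ) (by omega) ip rfl hipt hcase
        have : (π ipp : ℕ) = (π i : ℕ) := by
          have := hippPS.2
          omega
        have he : ipp = i := π.injective (Fin.val_injective this)
        have : (ipp : ℕ) = (i : ℕ) := by rw [he]
        omega
      · exact ⟨hi1, ip, by omega, by omega, by omega⟩
  -- the Finset S
  set S : Finset ℕ := ((univ : Finset (Fin n)).filter PS).image Fin.val with hS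
  have hmemS : ∀ p : ℕ, p ∈ S ↔ ∃ i : Fin n, PS i ∧ (i : ℕ) = p := by
    intro p
    simp only [hS, mem_image, mem_filter, mem_univ, true_and]
  refine ⟨S, ?_, ?_, ?_⟩
  · intro p hp
    obtain ⟨i, hi, rfl⟩ := (hmemS p).1 hp
    exact hi.1
  · intro p hp hp1
    obtain ⟨i, hi, hiv⟩ := (hmemS p).1 hp
    obtain ⟨i', hi', hiv'⟩ := (hmemS (p+1)).1 hp1
    exact hA3 (i : ℕ) i i' rfl hi hi' (by omega)
  · intro i hit
    by_cases h1 : PS i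
    · exact Or.inl ⟨(hmemS _).2 ⟨i, h1, rfl⟩, h1.2⟩
    · by_cases h2 : 1 ≤ (i : ℕ) ∧ ((i : ℕ) - 1) ∈ S
      · obtain ⟨ip, hipPS, hipv⟩ := (hmemS _).1 h2.2
        right; left
        refine ⟨?_, h2.1, h2.2, hA2 ip i hipPS (by omega)⟩
        intro hmem
        obtain ⟨i'', hi'', hiv''⟩ := (hmemS _).1 hmem
        exact h1 (by rwa [show i'' = i from Fin.val_injective hiv''] at hi'')
      · right; right
        have hlb1 := lb π hQ i
        have hub1 := hub i hit
        have hlo1 := hlo i hit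
        have hnotS : (i : ℕ) ∉ S := by
          intro hmem
          obtain ⟨i'', hi'', hiv''⟩ := (hmemS _).1 hmem
          exact h1 (by rwa [show i'' = i from Fin.val_injective hiv''] at hi'')
        refine ⟨hnotS, ?_, ?_⟩
        · by_cases h0 : (i : ℕ) = 0
          · exact Or.inl h0
          · right
            intro hmem
            exact h2 ⟨by omega, hmem⟩
        · -- value must be n-1-i
          by_cases hc1 : (π i : ℕ) + i + 2 = n
          · exact absurd ⟨by omega, hc1⟩ h1
          · by_cases hc2 : (π i : ℕ) + i = n
            · obtain ⟨hi1, ip, hipv, hipPS⟩ := hA1 (i : ℕ) i rfl hit hc2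
              exact absurd ⟨by omega, (hmemS _).2 ⟨ip, hipPS, by omega⟩⟩ h2
            · omega

end TopStruct

section Assemble
variable {n : ℕ} (π : Equiv.Perm (Fin n))

lemma fam_top_eval (t j : ℕ) (S : Finset ℕ) {i : ℕ} (hit : i < t) :
    (i ∈ S → fam n t j S i = n - 2 - i) ∧
    (i ∉ S → 1 ≤ i → i - 1 ∈ S → fam n t j S i = n - i) ∧
    (i ∉ S → (i = 0 ∨ i - 1 ∉ S) → fam n t j S i = n - 1 - i) := by
  refine ⟨fun h => by simp [fam, hit, h], fun h h1 h2 => by simp [fam, hit, h, h1, h2],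
    fun h h2 => ?_⟩
  rcases h2 with h2 | h2
  · subst h2; simp [fam, hit, h]
  · simp [fam, hit, h, h2]

theorem complete (hQ : Q1' π) (hNC : ¬ HasChain π) :
    ∃ j t S, Valid n j t S ∧ ∀ i : Fin n, (π i : ℕ) = fam n t j S i := by
  classical
  by_cases hsp : ∃ F : Fin n, n + 1 ≤ (π F : ℕ) + F
  · -- Case B
    obtain ⟨F, hspF⟩ := hsp
    obtain ⟨htl, hinc, hF3, q0, hq0F, hq0v⟩ := special_struct π hQ hNC F hspF
    set v := (π F : ℕ) with hv
    set jB := n - 1 - (F : ℕ) with hjB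
    set t := n - 1 - v with htdef
    have hFn : (F : ℕ) < n := F.2
    have hvn : v < n := (π F).2
    have hjB2 : jB ≤ 2 := by omega
    have hvjB : jB + 2 ≤ v := by omega
    have hFval : (F : ℕ) = n - 1 - jB := by omega
    have hFmax : ∀ k : Fin n, F < k → (π k : ℕ) < v :=
      fun k hk => lt_trans (htl q0 k hq0F hq0v hk) hq0v
    -- tail values
    have htailvals : ∀ k : Fin n, F < k → (π k : ℕ) = (k : ℕ) - F - 1 := by
      intro k hFk
      set Tv : Finset ℕ := ((Finset.Ioi F).image fun k' => (π k' : ℕ)) with hTv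
      have hinjval : ∀ s : Finset (Fin n), (s.image fun k' => (π k' : ℕ)).card = s.card := by
        intro s
        apply Finset.card_image_of_injOn
        intro a _ b _ h
        exact π.injective (Fin.val_injective h)
      have hTvcard : Tv.card = n - 1 - F := by rw [hTv, hinjval, Fin.card_Ioi]
      have hdc : ∀ x ∈ Tv, ∀ y, y < x → y ∈ Tv := by
        intro x hx y hy
        simp only [hTv, mem_image, mem_Ioi] at hx ⊢
        obtain ⟨k', hk', rfl⟩ := hx
        have hyn : y < n := by omega
        set q := π.symm ⟨y, hyn⟩ with hq
        have hπq : (π q : ℕ) = y := by rw [hq, π.apply_symm_apply]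
        rcases lt_trichotomy q F with h | h | h
        · exfalso
          have hqlow : π q < π F := by
            rw [Fin.lt_def, hπq]
            have := hFmax k' hk'
            omega
          exact absurd (htl q k' h hqlow hk') (by rw [Fin.lt_def, hπq]; omega)
        · exfalso
          rw [h] at hπq
          have := hFmax k' hk'
          omega
        · exact ⟨q, h, hπq⟩
      have hbound : Tv ⊆ Finset.range (n - 1 - F) := by
        intro x hx
        have hIic : Finset.Iic x ⊆ Tv := by
          intro y hy
          rcases lt_or_eq_of_le (Finset.mem_Iic.1 hy) with h | h
          · exact hdc x hx y h
          · rwa [h]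
        have := Finset.card_le_card hIic
        rw [Nat.card_Iic, hTvcard] at this
        simp only [Finset.mem_range]
        omega
      have hTveq : Tv = Finset.range (n - 1 - F) :=
        Finset.eq_of_subset_of_card_le hbound (by rw [Finset.card_range, hTvcard])
      have hmemTv : (π k : ℕ) < n - 1 - F := by
        have : (π k : ℕ) ∈ Tv := by
          simp only [hTv, mem_image, mem_Ioi]
          exact ⟨k, hFk, rfl⟩
        rw [hTveq] at this
        simpa using this
      have hlower : (k : ℕ) - F - 1 ≤ (π k : ℕ) := by
        have him : ((Finset.Ioo F k).image fun k' => (π k' : ℕ)) ⊆ Finset.range (π k) := by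
          intro x hx
          simp only [mem_image, mem_Ioo] at hx
          obtain ⟨k', ⟨h1, h2⟩, rfl⟩ := hx
          simp only [Finset.mem_range]
          exact hinc k' k h1 h2
        have := Finset.card_le_card him
        rw [hinjval, Fin.card_Ioo, Finset.card_range] at this
        omega
      have hupper : (π k : ℕ) ≤ (k : ℕ) - F - 1 := by
        have him : ((Finset.Ioi k).image fun k' => (π k' : ℕ)) ⊆
            Finset.Ico ((π k : ℕ) + 1) (n - 1 - F) := by
          intro x hx
          simp only [mem_image, mem_Ioi] at hx
          obtain ⟨k', h1, rfl⟩ := hx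
          have h2 : (π k' : ℕ) ∈ Tv := by
            simp only [hTv, mem_image, mem_Ioi]
            exact ⟨k', hFk.trans h1, rfl⟩
          rw [hTveq] at h2
          simp only [Finset.mem_range] at h2
          simp only [Finset.mem_Ico]
          exact ⟨hinc k k' hFk h1, h2⟩
        have := Finset.card_le_card him
        rw [hinjval, Fin.card_Ioi, Nat.card_Ico] at this
        omega
      omega
    have hinjval : ∀ s : Finset (Fin n), (s.image fun k' => (π k' : ℕ)).card = s.card := by
      intro s
      apply Finset.card_image_of_injOn
      intro a _ b _ h
      exact π.injective (Fin.val_injective h)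
    have hNoLowHigh : ∀ q1 q2 : Fin n, q1 < q2 → q2 < F → π q1 < π F → π q2 < π F := by
      intro q1 q2 h12 h2F h1v
      by_contra hcon
      have hne : π q2 ≠ π F := fun e => (ne_of_lt h2F) (π.injective e)
      have h2big : π F < π q2 := lt_of_le_of_ne (not_lt.1 hcon) (Ne.symm hne)
      exact absurd (hQ q1 q2 F h12 h2F (h1v.trans h2big)) (not_lt_of_gt h1v)
    have hLowDesc : ∀ q1 q2 : Fin n, q1 < q2 → q2 < F → π q1 < π F → π q2 < π q1 := by
      intro q1 q2 h12 h2F h1v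
      by_contra hcon
      have hne : π q1 ≠ π q2 := fun e => (ne_of_lt h12) (π.injective e)
      have : π q1 < π q2 := lt_of_le_of_ne (not_lt.1 hcon) hne
      exact absurd (hQ q1 q2 F h12 h2F this) (not_lt_of_gt h1v)
    -- lows form a suffix of [0, F)
    set Lows : Finset (Fin n) := (Finset.Iio F).filter (fun q => π q < π F) with hLows
    have hLowsCard : Lows.card = v - jB := by
      have hsplit : (univ : Finset (Fin n)).filter (fun q => π q < π F) =
          Lows ∪ Finset.Ioi F := by
        ext q
        simp only [mem_filter, mem_univ, true_and, hLows, Finset.mem_union, mem_Iio, mem_Ioi]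
        constructor
        · intro h
          have : q ≠ F := fun e => absurd h (e ▸ lt_irrefl _)
          rcases lt_or_gt_of_ne this with h' | h'
          · exact Or.inl ⟨h', h⟩
          · exact Or.inr h'
        · rintro (⟨_, h⟩ | h)
          · exact h
          · rw [Fin.lt_def]
            exact hFmax q h
      have hdisj : Disjoint Lows (Finset.Ioi F) := by
        rw [Finset.disjoint_left]
        intro q hq hq'
        simp only [hLows, mem_filter, mem_Iio] at hq
        simp only [mem_Ioi] at hq'
        exact absurd (hq.1.trans hq') (lt_irrefl _)
      have h1 := card_val_lt π (π F)
      rw [hsplit, Finset.card_union_of_disjoint hdisj, Fin.card_Ioi] at h1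
      omega
    have hsuffix : ∀ i : Fin n, t ≤ (i : ℕ) → (i : ℕ) < F → π i < π F := by
      intro i hti hiF
      by_contra hcon
      have hne : π i ≠ π F := fun e => (by omega : (i:ℕ) ≠ F) (congrArg Fin.val (π.injective e))
      have hhigh : π F < π i := lt_of_le_of_ne (not_lt.1 hcon) (Ne.symm hne)
      have hsub2 : Lows ⊆ Finset.Ioo i F := by
        intro q hq
        simp only [hLows, mem_filter, mem_Iio] at hq
        simp only [mem_Ioo]
        refine ⟨?_, hq.1⟩
        rcases lt_trichotomy q i with h | h | h
        · exact absurd (hNoLowHigh q i h (by rw [Fin.lt_def]; omega) hq.2)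
            (not_lt_of_gt hhigh)
        · exact absurd (h ▸ hq.2) (not_lt_of_gt hhigh)
        · exact h
      have := Finset.card_le_card hsub2
      rw [hLowsCard, Fin.card_Ioo] at this
      omega
    have hlowval : ∀ i : Fin n, t ≤ (i : ℕ) → (i : ℕ) < F → (π i : ℕ) + i + 2 = n := by
      intro i hti hiF
      have hFin : ∃ tF : Fin n, (tF : ℕ) = t := ⟨⟨t, by omega⟩, rfl⟩
      obtain ⟨tF, htF⟩ := hFin
      have hupper : (π i : ℕ) + i + 2 ≤ n := by
        have him : ((Finset.Icc tF i).image fun q => (π q : ℕ)) ⊆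
            Finset.Icc (π i : ℕ) (v - 1) := by
          intro x hx
          simp only [mem_image, Finset.mem_Icc] at hx ⊢
          obtain ⟨q, ⟨h1, h2⟩, rfl⟩ := hx
          have hqF : (q : ℕ) < F := by
            have := Fin.le_def.1 h2
            omega
          have hqlow : π q < π F := hsuffix q (by have := Fin.le_def.1 h1; omega) hqF
          constructor
          · rcases lt_or_eq_of_le h2 with h | h
            · exact le_of_lt (hLowDesc q i h (by rw [Fin.lt_def]; omega) hqlow)
            · rw [h]
          · have := Fin.lt_def.1 hqlow
            omega
        have hc := Finset.card_le_card him
        rw [hinjval, Nat.card_Icc, Fin.card_Icc, htF] at hc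
        have hilow := Fin.lt_def.1 (hsuffix i hti hiF)
        omega
      -- lower bound
      have hgejB : ∀ q : Fin n, t ≤ (q : ℕ) → (q : ℕ) < F → jB ≤ (π q : ℕ) := by
        intro q htq hqF
        rcases Nat.eq_zero_or_pos jB with h0 | h0
        · omega
        · have hkn : n - 1 < n := by omega
          set k : Fin n := ⟨n - 1, hkn⟩ with hk
          have hkv : (k : ℕ) = n - 1 := rfl
          have hFk : F < k := by rw [Fin.lt_def]; omega
          have hkval : (π k : ℕ) = jB - 1 := by rw [htailvals k hFk]
          have := Fin.lt_def.1 (htl q k hqF (hsuffix q htq hqF) hFk)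
          omega
      have hlower : n ≤ (π i : ℕ) + i + 2 := by
        have him2 : ((Finset.Ioo i F).image fun q => (π q : ℕ)) ⊆
            Finset.Ico jB (π i : ℕ) := by
          intro x hx
          simp only [mem_image, mem_Ioo] at hx
          obtain ⟨q, ⟨h1, h2⟩, rfl⟩ := hx
          have h2' : (q : ℕ) < F := Fin.lt_def.1 h2
          simp only [Finset.mem_Ico]
          refine ⟨hgejB q (by have := Fin.lt_def.1 h1; omega) h2', ?_⟩
          exact Fin.lt_def.1 (hLowDesc i q h1 h2' (hsuffix i hti hiF))
        have hc := Finset.card_le_card him2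
        rw [hinjval, Nat.card_Ico, Fin.card_Ioo] at hc
        have := hgejB i hti hiF
        omega
      omega
    -- top bounds
    have htFt : t + 2 ≤ (F : ℕ) := by omega
    have htop_ub : ∀ i : Fin n, (i : ℕ) < t → (π i : ℕ) + i ≤ n := by
      intro i hit
      by_contra hcon
      obtain ⟨_, hinc_i, _, _⟩ := special_struct π hQ hNC i (by omega)
      have hp1n : t < n := by omega
      have hp2n : t + 1 < n := by omega
      set p1 : Fin n := ⟨t, hp1n⟩ with hp1
      set p2 : Fin n := ⟨t + 1, hp2n⟩ with hp2
      have hd : π p2 < π p1 := hLowDesc p1 p2 (by rw [Fin.lt_def]; simp [hp1, hp2])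
        (by simp [hp2]; omega) (hsuffix p1 (by simp [hp1]) (by simp [hp1]; omega))
      exact absurd (hinc_i p1 p2 (by rw [Fin.lt_def]; simp [hp1]; omega)
        (by rw [Fin.lt_def]; simp [hp1, hp2])) (not_lt_of_gt hd)
    have hbot_le : ∀ q : Fin n, t ≤ (q : ℕ) → (π q : ℕ) ≤ v := by
      intro q htq
      rcases lt_trichotomy q F with h | h | h
      · exact le_of_lt (Fin.lt_def.1 (hsuffix q htq (Fin.lt_def.1 h)))
      · rw [h]
      · exact le_of_lt (hFmax q h)
    have htop_lo : ∀ i : Fin n, (i : ℕ) < t → n ≤ (π i : ℕ) + t := by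
      intro i hit
      by_contra hcon
      push_neg at hcon
      have hπi : (π i : ℕ) ≤ v := by omega
      set B : Finset (Fin n) := insert i ((univ : Finset (Fin n)).filter fun q : Fin n => t ≤ (q : ℕ))
        with hB
      have hfc : (((univ : Finset (Fin n)).filter fun q : Fin n => t ≤ (q : ℕ)).image Fin.val) =
          Finset.Ico t n := by
        ext x
        simp only [Finset.mem_image, Finset.mem_filter, Finset.mem_univ, true_and,
          Finset.mem_Ico]
        constructor
        · rintro ⟨a, ha, rfl⟩; exact ⟨ha, a.2⟩
        · rintro ⟨h1, h2⟩; exact ⟨⟨x, h2⟩, h1, rfl⟩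
      have hfcc : ((univ : Finset (Fin n)).filter fun q : Fin n => t ≤ (q : ℕ)).card = n - t := by
        rw [← Finset.card_image_of_injective _ Fin.val_injective, hfc, Nat.card_Ico]
      have hBcard : B.card = n - t + 1 := by
        rw [hB, Finset.card_insert_of_notMem (by simp [Nat.not_le.2 hit]), hfcc]
      have him : (B.image fun q => (π q : ℕ)) ⊆ Finset.range (v + 1) := by
        intro x hx
        simp only [mem_image, hB, Finset.mem_insert, mem_filter, mem_univ, true_and] at hx
        obtain ⟨q, hq, rfl⟩ := hx
        simp only [Finset.mem_range]
        rcases hq with rfl | hq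
        · omega
        · have := hbot_le q hq; omega
      have hc := Finset.card_le_card him
      rw [hinjval, hBcard, Finset.card_range] at hc
      omega
    have hvp : ∀ x : Fin n, n ≤ (x : ℕ) + t → ((π.symm x : ℕ) < t) := by
      intro x hx
      by_contra hcon
      push_neg at hcon
      have := hbot_le (π.symm x) hcon
      rw [π.apply_symm_apply] at this
      omega
    obtain ⟨S, hsub, hadj, hform⟩ := top_struct π hQ t (by omega) htop_ub htop_lo hvp
    refine ⟨jB, t, S, ⟨Or.inr ⟨hjB2, by omega⟩, hsub, hadj⟩, ?_⟩
    intro i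
    by_cases hit : (i : ℕ) < t
    · obtain he := fam_top_eval (n := n) t jB S hit
      rcases hform i hit with ⟨h1, h2⟩ | ⟨h1, h2, h3, h4⟩ | ⟨h1, h2, h3⟩
      · rw [he.1 h1]; omega
      · rw [he.2.1 h1 h2 h3]; omega
      · rw [he.2.2 h1 h2]; omega
    · push_neg at hit
      rcases lt_trichotomy (i : ℕ) (F : ℕ) with h | h | h
      · have := hlowval i hit h
        have hfam : fam n t jB S i = n - 2 - i := by
          simp only [fam]
          rw [if_neg (by omega), if_pos (by omega)]
        omega
      · have hfam : fam n t jB S i = n - t - 1 := by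
          simp only [fam]
          rw [if_neg (by omega), if_neg (by omega), if_pos (by omega)]
        have he : i = F := Fin.val_injective h
        rw [hfam, he]
        omega
      · have hiF : F < i := by rw [Fin.lt_def]; omega
        have := htailvals i hiF
        have hfam : fam n t jB S i = (i : ℕ) + jB - n := by
          simp only [fam]
          rw [if_neg (by omega), if_neg (by omega), if_neg (by omega)]
        omega
  · -- Case A: no special position
    push_neg at hsp
    have hub : ∀ i : Fin n, (i : ℕ) < n → (π i : ℕ) + i ≤ n := fun i _ => by
      have := hsp i; omega
    obtain ⟨S, hsub, hadj, hform⟩ := top_struct π hQ n le_rfl hub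
      (fun i _ => by omega) (fun x _ => (π.symm x).2)
    refine ⟨3, n, S, ⟨Or.inl ⟨rfl, rfl⟩, hsub, hadj⟩, ?_⟩
    intro i
    have hit : (i : ℕ) < n := i.2
    obtain he := fam_top_eval (n := n) n 3 S hit
    rcases hform i hit with ⟨h1, h2⟩ | ⟨h1, h2, h3, h4⟩ | ⟨h1, h2, h3⟩
    · rw [he.1 h1]; omega
    · rw [he.2.1 h1 h2 h3]; omega
    · rw [he.2.2 h1 h2]; omega

end Assemble

section Counting
open Finset

/-- subsets of `range m` with no two adjacent elements -/
def na (m : ℕ) : Finset (Finset ℕ) :=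
  (Finset.range m).powerset.filter fun S => ∀ p ∈ S, p + 1 ∉ S

lemma mem_na {m : ℕ} {S : Finset ℕ} :
    S ∈ na m ↔ (∀ p ∈ S, p < m) ∧ ∀ p ∈ S, p + 1 ∉ S := by
  simp only [na, mem_filter, Finset.mem_powerset]
  constructor
  · rintro ⟨h1, h2⟩
    exact ⟨fun p hp => Finset.mem_range.1 (h1 hp), h2⟩
  · rintro ⟨h1, h2⟩
    exact ⟨fun p hp => Finset.mem_range.2 (h1 p hp), h2⟩

lemma na_card : ∀ m, (na m).card = Nat.fib (m + 2) := by
  intro m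
  induction m using Nat.strong_induction_on with
  | _ m IH =>
    match m with
    | 0 =>
      have : na 0 = {∅} := by
        ext S
        simp only [mem_na, Finset.mem_singleton]
        constructor
        · rintro ⟨h1, _⟩
          exact Finset.eq_empty_of_forall_notMem fun p hp => absurd (h1 p hp) (by omega)
        · rintro rfl
          simp
      rw [this]
      simp
    | 1 =>
      have : na 1 = {∅, {0}} := by
        ext S
        simp only [mem_na, Finset.mem_insert, Finset.mem_singleton]
        constructor
        · rintro ⟨h1, _⟩
          by_cases h0 : 0 ∈ S
          · right
            ext p
            simp only [Finset.mem_singleton]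
            constructor
            · intro hp; have := h1 p hp; omega
            · rintro rfl; exact h0
          · left
            exact Finset.eq_empty_of_forall_notMem fun p hp => by
              have := h1 p hp
              have : p = 0 := by omega
              exact h0 (this ▸ hp)
        · rintro (rfl | rfl)
          · simp
          · constructor
            · intro p hp
              simp only [Finset.mem_singleton] at hp
              omega
            · intro p hp
              simp only [Finset.mem_singleton] at hp ⊢
              omega
      rw [this]
      rw [Finset.card_insert_of_notMem (by simp [Finset.singleton_ne_empty, Ne.symm]), Finset.card_singleton]
      decide
    | (k+2) =>
      have hsplit : na (k + 2) = na (k + 1) ∪ (na k).image (insert (k + 1)) := by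
        ext S
        simp only [Finset.mem_union, Finset.mem_image, mem_na]
        constructor
        · rintro ⟨h1, h2⟩
          by_cases hm : k + 1 ∈ S
          · right
            refine ⟨S.erase (k + 1), ⟨?_, ?_⟩, ?_⟩
            · intro p hp
              have hpS := Finset.mem_of_mem_erase hp
              have hpne := Finset.ne_of_mem_erase hp
              have h3 := h1 p hpS
              by_contra hcon
              have : p = k := by omega
              exact (h2 p hpS) (by rwa [this])
            · intro p hp
              have hpS := Finset.mem_of_mem_erase hp
              exact fun hc => (h2 p hpS) (Finset.mem_of_mem_erase hc)
            · exact Finset.insert_erase hm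
          · left
            refine ⟨fun p hp => ?_, h2⟩
            have := h1 p hp
            have : p ≠ k + 1 := fun e => hm (e ▸ hp)
            omega
        · rintro (⟨h1, h2⟩ | ⟨T, ⟨h1, h2⟩, rfl⟩)
          · exact ⟨fun p hp => by have := h1 p hp; omega, h2⟩
          · constructor
            · intro p hp
              rcases Finset.mem_insert.1 hp with rfl | hp'
              · omega
              · have := h1 p hp'; omega
            · intro p hp
              rcases Finset.mem_insert.1 hp with rfl | hp'
              · intro hc
                rcases Finset.mem_insert.1 hc with h | h
                · omega
                · have := h1 _ h; omega
              · intro hc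
                rcases Finset.mem_insert.1 hc with h | h
                · have := h1 p hp'; omega
                · exact (h2 p hp') h
      have hdisj : Disjoint (na (k + 1)) ((na k).image (insert (k + 1))) := by
        rw [Finset.disjoint_left]
        intro S hS hS'
        simp only [Finset.mem_image] at hS'
        obtain ⟨T, hT, rfl⟩ := hS'
        have := (mem_na.1 hS).1 (k + 1) (Finset.mem_insert_self _ _)
        omega
      have hinj : Set.InjOn (insert (k + 1)) ((na k : Finset (Finset ℕ)) : Set (Finset ℕ)) := by
        intro a ha b hb he
        have hka : k + 1 ∉ a := fun hc => by have := (mem_na.1 ha).1 _ hc; omega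
        have hkb : k + 1 ∉ b := fun hc => by have := (mem_na.1 hb).1 _ hc; omega
        rw [← Finset.erase_insert hka, ← Finset.erase_insert hkb, he]
      rw [hsplit, Finset.card_union_of_disjoint hdisj, Finset.card_image_of_injOn hinj,
        IH (k+1) (by omega), IH k (by omega)]
      have h1 : Nat.fib (k + 4) = Nat.fib (k + 2) + Nat.fib (k + 3) := Nat.fib_add_two
      show Nat.fib (k + 3) + Nat.fib (k + 2) = Nat.fib (k + 4)
      omega

lemma sum_fib (M : ℕ) : (∑ t ∈ Finset.range M, Nat.fib (t + 1)) = Nat.fib (M + 2) - 1 := by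
  induction M with
  | zero => simp
  | succ M IH =>
    rw [Finset.sum_range_succ, IH]
    have h1 : Nat.fib (M + 3) = Nat.fib (M + 1) + Nat.fib (M + 2) := Nat.fib_add_two
    have h2 : 1 ≤ Nat.fib (M + 2) := Nat.fib_pos.2 (by omega)
    show Nat.fib (M + 2) - 1 + Nat.fib (M + 1) = Nat.fib (M + 3) - 1
    omega

end Counting

section IdxSec
open Finset

def Idx (n : ℕ) : Finset (ℕ × ℕ × Finset ℕ) :=
  ((na (n-1)).image fun S => ((3:ℕ), n, S)) ∪
  ((Finset.range 3).biUnion fun j => (Finset.range (n+1)).biUnion fun t =>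
    if t + 3 + j ≤ n then (na (t-1)).image fun S => (j, t, S) else ∅)

lemma na_card' (t : ℕ) : (na (t-1)).card = Nat.fib (t+1) := by
  match t with
  | 0 => rw [show (0:ℕ) - 1 = 0 from rfl, na_card]; decide
  | (t+1) => rw [show t + 1 - 1 = t from rfl, na_card]

lemma mem_Idx {n : ℕ} (x : ℕ × ℕ × Finset ℕ) (hn : 3 ≤ n) :
    x ∈ Idx n ↔ Valid n x.1 x.2.1 x.2.2 := by
  obtain ⟨j, t, S⟩ := x
  simp only [Idx, Finset.mem_union, Finset.mem_image, Finset.mem_biUnion, Finset.mem_range]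
  constructor
  · rintro (⟨S', hS', he⟩ | ⟨j', hj', t', ht', hx⟩)
    · obtain ⟨rfl, rfl, rfl⟩ := Prod.mk.injEq .. ▸ (by exact he : ((3:ℕ), n, S') = (j, t, S))
      rw [mem_na] at hS'
      exact ⟨Or.inl ⟨rfl, rfl⟩, fun p hp => by have := hS'.1 p hp; omega, hS'.2⟩
    · by_cases hc : t' + 3 + j' ≤ n
      · rw [if_pos hc] at hx
        simp only [Finset.mem_image] at hx
        obtain ⟨S', hS', he⟩ := hx
        obtain ⟨rfl, rfl, rfl⟩ := Prod.mk.injEq .. ▸ (by exact he : (j', t', S') = (j, t, S))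
        rw [mem_na] at hS'
        exact ⟨Or.inr ⟨by omega, hc⟩, fun p hp => by have := hS'.1 p hp; omega, hS'.2⟩
      · rw [if_neg hc] at hx
        exact absurd hx (Finset.notMem_empty _)
  · rintro ⟨hjt, hsub, hadj⟩
    rcases hjt with ⟨rfl, rfl⟩ | ⟨hj2, htn⟩
    · left
      exact ⟨S, mem_na.2 ⟨fun p hp => by have := hsub p hp; omega, hadj⟩, rfl⟩
    · right
      refine ⟨j, by omega, t, by omega, ?_⟩
      rw [if_pos htn]
      simp only [Finset.mem_image]
      exact ⟨S, mem_na.2 ⟨fun p hp => by have := hsub p hp; omega, hadj⟩, rfl⟩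

lemma sumif (n j : ℕ) :
    (∑ t ∈ Finset.range (n+1), if t + 3 + j ≤ n then Nat.fib (t+1) else 0) =
      Nat.fib ((n + 1 - (3+j)) + 2) - 1 := by
  rw [← Finset.sum_filter]
  have : (Finset.range (n+1)).filter (fun t => t + 3 + j ≤ n) =
      Finset.range (n + 1 - (3+j)) := by
    ext x
    simp only [Finset.mem_filter, Finset.mem_range]
    omega
  rw [this, sum_fib]

lemma Idx_card {n : ℕ} (hn : 3 ≤ n) :
    (Idx n).card + 3 = Nat.fib (n+2) + Nat.fib n := by
  have hdisj : Disjoint ((na (n-1)).image fun S => ((3:ℕ), n, S))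
      ((Finset.range 3).biUnion fun j => (Finset.range (n+1)).biUnion fun t =>
        if t + 3 + j ≤ n then (na (t-1)).image fun S => (j, t, S) else ∅) := by
    rw [Finset.disjoint_left]
    rintro x hx hx'
    simp only [Finset.mem_image] at hx
    obtain ⟨S, _, rfl⟩ := hx
    simp only [Finset.mem_biUnion, Finset.mem_range] at hx'
    obtain ⟨j', hj', t', _, hx⟩ := hx'
    by_cases hc : t' + 3 + j' ≤ n
    · rw [if_pos hc] at hx
      simp only [Finset.mem_image, Prod.mk.injEq] at hx
      obtain ⟨S', _, h1, _⟩ := hx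
      omega
    · rw [if_neg hc] at hx
      exact absurd hx (Finset.notMem_empty _)
  have hcard1 : ((na (n-1)).image fun S => ((3:ℕ), n, S)).card = Nat.fib (n+1) := by
    rw [Finset.card_image_of_injOn (fun a _ b _ h => by
      simpa using congrArg (fun p => p.2.2) h)]
    have := na_card' n
    omega
  have hinner : ∀ j ∈ Finset.range 3,
      ((Finset.range (n+1)).biUnion fun t =>
        if t + 3 + j ≤ n then (na (t-1)).image fun S => (j, t, S) else ∅).card =
      Nat.fib ((n + 1 - (3+j)) + 2) - 1 := by
    intro j _
    rw [Finset.card_biUnion (fun t1 h1 t2 h2 hne => by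
      rw [Function.onFun, Finset.disjoint_left]
      intro x hx hx'
      by_cases hc1 : t1 + 3 + j ≤ n
      · by_cases hc2 : t2 + 3 + j ≤ n
        · rw [if_pos hc1] at hx; rw [if_pos hc2] at hx'
          simp only [Finset.mem_image, Prod.mk.injEq] at hx hx'
          obtain ⟨S1, _, _, h1, _⟩ := hx
          obtain ⟨S2, _, _, h2, _⟩ := hx'
          exact hne (by omega)
        · rw [if_neg hc2] at hx'; exact absurd hx' (Finset.notMem_empty _)
      · rw [if_neg hc1] at hx; exact absurd hx (Finset.notMem_empty _))]
    rw [← sumif n j]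
    apply Finset.sum_congr rfl
    intro t _
    by_cases hc : t + 3 + j ≤ n
    · rw [if_pos hc, if_pos hc, Finset.card_image_of_injOn (fun a _ b _ h => by
        simpa using congrArg (fun p => p.2.2) h), na_card']
    · rw [if_neg hc, if_neg hc, Finset.card_empty]
  have hdisj2 : ∀ j1 ∈ Finset.range 3, ∀ j2 ∈ Finset.range 3, j1 ≠ j2 →
      Disjoint ((Finset.range (n+1)).biUnion fun t =>
        if t + 3 + j1 ≤ n then (na (t-1)).image fun S => (j1, t, S) else ∅)
      ((Finset.range (n+1)).biUnion fun t =>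
        if t + 3 + j2 ≤ n then (na (t-1)).image fun S => (j2, t, S) else ∅) := by
    intro j1 _ j2 _ hne
    rw [Finset.disjoint_left]
    intro x hx hx'
    simp only [Finset.mem_biUnion, Finset.mem_range] at hx hx'
    obtain ⟨t1, _, hx⟩ := hx
    obtain ⟨t2, _, hx'⟩ := hx'
    by_cases hc1 : t1 + 3 + j1 ≤ n
    · by_cases hc2 : t2 + 3 + j2 ≤ n
      · rw [if_pos hc1] at hx; rw [if_pos hc2] at hx'
        simp only [Finset.mem_image, Prod.mk.injEq] at hx hx'
        obtain ⟨S1, _, h1, _⟩ := hx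
        obtain ⟨S2, _, h2, _⟩ := hx'
        exact hne (by omega)
      · rw [if_neg hc2] at hx'; exact absurd hx' (Finset.notMem_empty _)
    · rw [if_neg hc1] at hx; exact absurd hx (Finset.notMem_empty _)
  rw [Idx, Finset.card_union_of_disjoint hdisj, hcard1, Finset.card_biUnion hdisj2,
    Finset.sum_congr rfl hinner]
  rw [Finset.sum_range_succ, Finset.sum_range_succ, Finset.sum_range_succ, Finset.sum_range_zero]
  -- now pure fib arithmetic
  match n, hn with
  | 3, _ => decide
  | 4, _ => decide
  | (m+5), _ =>
    have e0 : m + 5 + 1 - 3 + 2 = m + 5 := by omega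
    have e1 : m + 5 + 1 - 4 + 2 = m + 4 := by omega
    have e2 : m + 5 + 1 - 5 + 2 = m + 3 := by omega
    rw [show m + 5 + 1 - (3 + 0) = m + 5 + 1 - 3 from by omega, e0,
      show m + 5 + 1 - (3 + 1) = m + 5 + 1 - 4 from by omega, e1,
      show m + 5 + 1 - (3 + 2) = m + 5 + 1 - 5 from by omega, e2]
    have h1 : Nat.fib (m + 7) = Nat.fib (m + 5) + Nat.fib (m + 6) := Nat.fib_add_two
    have h2 : Nat.fib (m + 6) = Nat.fib (m + 4) + Nat.fib (m + 5) := Nat.fib_add_two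
    have h3 : Nat.fib (m + 5) = Nat.fib (m + 3) + Nat.fib (m + 4) := Nat.fib_add_two
    have h4 : 1 ≤ Nat.fib (m + 3) := Nat.fib_pos.2 (by omega)
    have h5 : 1 ≤ Nat.fib (m + 4) := Nat.fib_pos.2 (by omega)
    show Nat.fib (m + 5 + 1) + (0 + (Nat.fib (m + 5) - 1) + (Nat.fib (m + 4) - 1) +
      (Nat.fib (m + 3) - 1)) + 3 = Nat.fib (m + 5 + 2) + Nat.fib (m + 5)
    have e6 : Nat.fib (m + 5 + 1) = Nat.fib (m + 6) := rfl
    have e7 : Nat.fib (m + 5 + 2) = Nat.fib (m + 7) := rfl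
    omega

end IdxSec

section Glue
open Finset

attribute [local instance] Classical.propDecidable

variable {n : ℕ}

lemma fam_special {t j : ℕ} {S : Finset ℕ} (hv : Valid n j t S) {i : ℕ} (hi : i < n) :
    (n + 1 ≤ fam n t j S i + i) ↔ (j ≤ 2 ∧ i + 1 + j = n ∧ fam n t j S i + t + 1 = n) := by
  constructor
  · intro h
    rcases fam_spec hv i hi with hA | hA | hA | hA | hA | hA <;>
      first
      | omega
      | exact ⟨hA.2.2.2.1, hA.2.1, hA.2.2.1⟩
  · intro ⟨h1, h2, h3⟩
    rcases fam_spec hv i hi with hA | hA | hA | hA | hA | hA <;> omega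

lemma idx_inj (hn : 3 ≤ n) {j t j' t' : ℕ} {S S' : Finset ℕ}
    (hv : Valid n j t S) (hv' : Valid n j' t' S')
    (he : ∀ i, i < n → fam n t j S i = fam n t' j' S' i) :
    j = j' ∧ t = t' ∧ S = S' := by
  have hjt : (j = 3 ∧ t = n) ∨ (j ≤ 2 ∧ t + 3 + j ≤ n) := hv.1
  have hjt' : (j' = 3 ∧ t' = n) ∨ (j' ≤ 2 ∧ t' + 3 + j' ≤ n) := hv'.1
  -- j and t agree
  have hj : j = j' ∧ t = t' := by
    rcases hjt with ⟨hj3, ht3⟩ | ⟨hj2, htn⟩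
    · rcases hjt' with ⟨hj3', ht3'⟩ | ⟨hj2', htn'⟩
      · exact ⟨by omega, by omega⟩
      · exfalso
        have hi : n - 1 - j' < n := by omega
        have h1 := (fam_special hv' hi).2 ⟨hj2', by omega, ?_⟩
        · rw [← he _ hi] at h1
          have := (fam_special hv hi).1 h1
          omega
        · have := (fam_special hv' hi)
          rcases fam_spec hv' (n - 1 - j') hi with hA | hA | hA | hA | hA | hA <;> omega
    · rcases hjt' with ⟨hj3', ht3'⟩ | ⟨hj2', htn'⟩
      · exfalso
        have hi : n - 1 - j < n := by omega
        have h1 := (fam_special hv hi).2 ⟨hj2, by omega, ?_⟩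
        · rw [he _ hi] at h1
          have := (fam_special hv' hi).1 h1
          omega
        · rcases fam_spec hv (n - 1 - j) hi with hA | hA | hA | hA | hA | hA <;> omega
      · -- both have specials
        have hi : n - 1 - j < n := by omega
        have hi' : n - 1 - j' < n := by omega
        have h1 : fam n t j S (n-1-j) + t + 1 = n := by
          rcases fam_spec hv (n - 1 - j) hi with hA | hA | hA | hA | hA | hA <;> omega
        have h1' : fam n t' j' S' (n-1-j') + t' + 1 = n := by
          rcases fam_spec hv' (n - 1 - j') hi' with hA | hA | hA | hA | hA | hA <;> omega
        have h2 := (fam_special hv hi).2 ⟨hj2, by omega, h1⟩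
        rw [he _ hi] at h2
        have h3 := (fam_special hv' hi).1 h2
        have hjj : j = j' := by omega
        subst hjj
        rw [he _ hi] at h1
        omega
  refine ⟨hj.1, hj.2, ?_⟩
  obtain ⟨rfl, rfl⟩ := hj
  -- S = S'
  ext p
  have hSmem : ∀ (S'' : Finset ℕ), Valid n j t S'' →
      (p ∈ S'' ↔ p + 2 ≤ t ∧ fam n t j S'' p + p + 2 = n) := by
    intro S'' hv''
    constructor
    · intro hp
      have h2 := hv''.2.1 p hp
      have hpn : p < n := by
        rcases hv''.1 with ⟨_, h⟩ | ⟨_, h⟩ <;> omega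
      rcases fam_spec hv'' p hpn with hA | hA | hA | hA | hA | hA <;>
        first
        | exact ⟨h2, hA.2.2.1⟩
        | (exfalso; first | exact hA.2.1 hp | omega)
    · rintro ⟨h2, h3⟩
      have hpn : p < n := by
        rcases hv''.1 with ⟨_, h⟩ | ⟨_, h⟩ <;> omega
      rcases fam_spec hv'' p hpn with hA | hA | hA | hA | hA | hA <;>
        first
        | exact hA.2.1
        | omega
  rw [hSmem S hv, hSmem S' hv']
  constructor
  · rintro ⟨h1, h2⟩
    refine ⟨h1, ?_⟩
    rw [← he p (by rcases hv.1 with ⟨_, h⟩ | ⟨_, h⟩ <;> omega)]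
    exact h2
  · rintro ⟨h1, h2⟩
    refine ⟨h1, ?_⟩
    rw [he p (by rcases hv.1 with ⟨_, h⟩ | ⟨_, h⟩ <;> omega)]
    exact h2

lemma famPerm_Q1 {t j : ℕ} {S : Finset ℕ} (hv : Valid n j t S) : Q1' (famPerm hv) := by
  intro a b k hab hbk hasc
  rw [Fin.lt_def] at hab hbk hasc ⊢
  rw [famPerm_apply, famPerm_apply] at hasc ⊢
  exact fam_Q1 hv b.2 k.2 hab hbk hasc

lemma famPerm_noChain {t j : ℕ} {S : Finset ℕ} (hv : Valid n j t S) :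
    ¬ HasChain (famPerm hv) := by
  rintro ⟨i1, i2, i3, i4, i5, h12, h23, h34, h45, e54, e42, e21, e13⟩
  rw [Fin.lt_def] at h12 h23 h34 h45 e54 e42 e21 e13
  rw [famPerm_apply, famPerm_apply] at e54 e42 e21 e13
  exact fam_noChain hv i5.2 h12 h23 h34 h45 e13 e54

theorem main_count (hn : 3 ≤ n) :
    ((univ : Finset (Equiv.Perm (Fin n))).filter
      (fun π => Q1' π ∧ ¬ HasChain π)).card + 3 = Nat.fib (n+2) + Nat.fib n := by
  classical
  rw [← Idx_card hn]
  congr 1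
  symm
  refine Finset.card_bij
    (fun x hx => famPerm (n := n) (t := x.2.1) (j := x.1) (S := x.2.2)
      ((mem_Idx x hn).1 hx)) ?_ ?_ ?_
  · intro x hx
    simp only [Finset.mem_filter, Finset.mem_univ, true_and]
    exact ⟨famPerm_Q1 _, famPerm_noChain _⟩
  · intro x hx y hy he
    have hvx := (mem_Idx x hn).1 hx
    have hvy := (mem_Idx y hn).1 hy
    have hvals : ∀ i, i < n → fam n x.2.1 x.1 x.2.2 i = fam n y.2.1 y.1 y.2.2 i := by
      intro i hi
      have := congrArg (fun π : Equiv.Perm (Fin n) => (π ⟨i, hi⟩ : ℕ)) he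
      simpa [famPerm_apply] using this
    obtain ⟨h1, h2, h3⟩ := idx_inj hn hvx hvy hvals
    exact Prod.ext h1 (Prod.ext h2 h3)
  · intro π hπ
    simp only [Finset.mem_filter, Finset.mem_univ, true_and] at hπ
    obtain ⟨j, t, S, hv, hvals⟩ := complete π hπ.1 hπ.2
    refine ⟨(j, t, S), (mem_Idx _ hn).2 hv, ?_⟩
    apply Equiv.ext
    intro i
    apply Fin.val_injective
    rw [famPerm_apply]
    exact (hvals i).symm

end Glue

section Char
variable {n : ℕ} (π : Equiv.Perm (Fin n))

lemma avoid12_iff : (PAvoids π p132 ∧ PAvoids π p123) ↔ Q1' π := by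
  constructor
  · rintro ⟨h132, h123⟩ i j k hij hjk hπ
    by_contra h
    push_neg at h
    have hne : π k ≠ π i := fun e => (π.injective e ▸ (ne_of_gt (hij.trans hjk))) rfl
    have hik : π i < π k := lt_of_le_of_ne h (Ne.symm hne)
    rcases lt_or_gt_of_ne (fun e : π j = π k => (ne_of_gt hjk) (π.injective e).symm) with hjk' | hjk'
    · exact h123 ⟨![i, j, k], by
        intro a b hab
        fin_cases a <;> fin_cases b <;> simp_all <;> omega, by
        intro s t
        fin_cases s <;> fin_cases t <;>
          simp [p123, Matrix.cons_val_zero, Matrix.cons_val_one] <;> omega⟩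
    · exact h132 ⟨![i, j, k], by
        intro a b hab
        fin_cases a <;> fin_cases b <;> simp_all <;> omega, by
        intro s t
        fin_cases s <;> fin_cases t <;>
          simp [p132, Equiv.ofBijective_apply, Matrix.cons_val_zero, Matrix.cons_val_one] <;>
          omega⟩
  · intro hQ
    constructor
    · rintro ⟨f, hf, hiff⟩
      have h01 : f 0 < f 1 := hf (by decide)
      have h12 : f 1 < f 2 := hf (by decide)
      have a01 : π (f 0) < π (f 1) := (hiff 0 1).2 (by simp [p132, Equiv.ofBijective_apply] <;> decide)
      have a02 : π (f 0) < π (f 2) := (hiff 0 2).2 (by simp [p132, Equiv.ofBijective_apply] <;> decide)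
      exact absurd a02 (not_lt_of_gt (hQ _ _ _ h01 h12 a01))
    · rintro ⟨f, hf, hiff⟩
      have h01 : f 0 < f 1 := hf (by decide)
      have h12 : f 1 < f 2 := hf (by decide)
      have a01 : π (f 0) < π (f 1) := (hiff 0 1).2 (by simp [p123] <;> decide)
      have a02 : π (f 0) < π (f 2) := (hiff 0 2).2 (by simp [p123] <;> decide)
      exact absurd a02 (not_lt_of_gt (hQ _ _ _ h01 h12 a01))

lemma avoidg_iff : PAvoids π g022 ↔ ¬ HasChain π := by
  unfold PAvoids
  constructor
  · intro h hc
    rcases hc with ⟨i1, i2, i3, i4, i5, h12, h23, h34, h45, e54, e42, e21, e13⟩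
    refine h ⟨![i1, i2, i3, i4, i5], ?_, ?_⟩
    · intro a b hab
      fin_cases a <;> fin_cases b <;> simp_all <;> omega
    · intro s t
      have o1 : π i5 < π i2 := e54.trans e42
      have o2 : π i5 < π i1 := o1.trans e21
      have o3 : π i5 < π i3 := o2.trans e13
      have o4 : π i4 < π i1 := e42.trans e21
      have o5 : π i4 < π i3 := o4.trans e13
      have o6 : π i2 < π i3 := e21.trans e13
      fin_cases s <;> fin_cases t <;>
        simp [g022, Equiv.ofBijective_apply] <;> omega
  · rintro hnc ⟨f, hf, hiff⟩
    refine hnc ⟨f 0, f 1, f 2, f 3, f 4, hf (by decide), hf (by decide), hf (by decide),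
      hf (by decide), ?_, ?_, ?_, ?_⟩
    · exact (hiff 4 3).2 (by simp [g022, Equiv.ofBijective_apply] <;> decide)
    · exact (hiff 3 1).2 (by simp [g022, Equiv.ofBijective_apply] <;> decide)
    · exact (hiff 1 0).2 (by simp [g022, Equiv.ofBijective_apply] <;> decide)
    · exact (hiff 0 2).2 (by simp [g022, Equiv.ofBijective_apply] <;> decide)

end Char



theorem statement7 (n : ℕ) (hn : 3 ≤ n) :
    (Nat.card {π : Equiv.Perm (Fin n) //
        PAvoids π p132 ∧ PAvoids π p123 ∧ PAvoids π g022} : ℤ) =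
      Nat.fib (n + 2) + Nat.fib n - 3 := by
  classical
  have hequiv : ∀ π : Equiv.Perm (Fin n),
      (PAvoids π p132 ∧ PAvoids π p123 ∧ PAvoids π g022) ↔ (Q1' π ∧ ¬ HasChain π) := by
    intro π
    constructor
    · rintro ⟨h1, h2, h3⟩
      exact ⟨(avoid12_iff π).1 ⟨h1, h2⟩, (avoidg_iff π).1 h3⟩
    · rintro ⟨h1, h2⟩
      obtain ⟨a, b⟩ := (avoid12_iff π).2 h1
      exact ⟨a, b, (avoidg_iff π).2 h2⟩
  have h1 : Nat.card {π : Equiv.Perm (Fin n) //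
      PAvoids π p132 ∧ PAvoids π p123 ∧ PAvoids π g022}
      = ((Finset.univ : Finset (Equiv.Perm (Fin n))).filter
          (fun π => Q1' π ∧ ¬ HasChain π)).card := by
    rw [Nat.card_eq_fintype_card, Fintype.card_subtype]
    apply Finset.card_bij (fun π _ => π)
    · intro π hπ
      simp only [Finset.mem_filter, Finset.mem_univ, true_and] at hπ ⊢
      exact (hequiv π).1 hπ
    · intro a _ b _ h
      exact h
    · intro π hπ
      simp only [Finset.mem_filter, Finset.mem_univ, true_and] at hπ
      refine ⟨π, ?_, rfl⟩
      simp only [Finset.mem_filter, Finset.mem_univ, true_and]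
      exact (hequiv π).2 hπ
  rw [h1]
  have h2 := main_count (n := n) hn
  push_cast
  omega
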